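/- Let L be a modular lattice of finite height that does not split strongly. Then there exist n ∈ ℕ₀ and a lattice M that does not split such that L is isomorphic to M × (B₂)ⁿ, where B₂ is the two-element lattice. -/

import Mathlib

/-- An operation sequence on a lattice `L`: `f n` is the `(n+1)`-ary operation,
so `f n` corresponds to the paper's `f_{n+1}`. -/
def OpSeq (L : Type) : Type := ∀ n : ℕ, (Fin (n + 1) → L) → L

/-- Admissibility: (HC1), (HC2), (HC3), (HC4), (HC7), (HC8). -/
def IsAdmissible {L : Type} [CompleteLattice L] (f : OpSeq L) : Prop :=
  -- (HC1)
  (∀ n (α : Fin (n + 1) → L) (k : Fin (n + 1)), f n α ≤ α k) ∧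
  -- (HC2) monotonicity
  (∀ n (α β : Fin (n + 1) → L), α ≤ β → f n α ≤ f n β) ∧
  -- (HC3)
  (∀ n (α : Fin (n + 2) → L), f (n + 1) α ≤ f n (fun i => α i.succ)) ∧
  -- (HC4) symmetry
  (∀ n (α : Fin (n + 1) → L) (π : Equiv.Perm (Fin (n + 1))), f n (α ∘ π) = f n α) ∧
  -- (HC7) join distributivity in each argument
  (∀ n (i : Fin (n + 1)) (α : Fin (n + 1) → L) (S : Set L),
      f n (Function.update α i (sSup S)) = ⨆ b ∈ S, f n (Function.update α i b)) ∧
  -- (HC8)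
  (∀ n k (hkn : k ≤ n) (α : Fin (n + 1) → L),
      f k (fun i : Fin (k + 1) =>
        if hi : (i : ℕ) < k then α ⟨i.1, by omega⟩
        else f (n - k) (fun j : Fin (n - k + 1) => α ⟨k + j.1, by have := j.2; omega⟩)) ≤
      f n α)

/-- `(δ, ε)` is a splitting pair. -/
def IsSplittingPair {L : Type} [Lattice L] [BoundedOrder L] (δ ε : L) : Prop :=
  δ < ⊤ ∧ ⊥ < ε ∧ ∀ α : L, ε ≤ α ∨ α ≤ δ

/-- `L` splits. -/
def Splits (L : Type) [Lattice L] [BoundedOrder L] : Prop :=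
  ∃ δ ε : L, IsSplittingPair δ ε

/-- `L` splits strongly. -/
def SplitsStrongly (L : Type) [Lattice L] [BoundedOrder L] : Prop :=
  ∃ δ ε : L, IsSplittingPair δ ε ∧ ε ≤ δ

section Aux

/-- Modularity passes to `Set.Iic`. -/
instance iicModular {L : Type} [Lattice L] [IsModularLattice L] (δ : L) :
    IsModularLattice (Set.Iic δ) := by
  constructor
  intro x y z hxz
  change (((x ⊔ y) ⊓ z : Set.Iic δ) : L) ≤ (((x ⊔ y ⊓ z) : Set.Iic δ) : L)
  rw [Set.Iic.coe_inf, Set.Iic.coe_sup, Set.Iic.coe_sup, Set.Iic.coe_inf]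
  exact IsModularLattice.sup_inf_le_assoc_of_le (y : L) hxz

/-- The splitting order isomorphism. -/
noncomputable def splitIso {L : Type} [Lattice L] [BoundedOrder L] [IsModularLattice L]
    {δ ε : L} (hsp : IsSplittingPair δ ε) (hsup : δ ⊔ ε = ⊤) (hinf : δ ⊓ ε = ⊥) :
    L ≃o Set.Iic δ × Prop := by
  classical
  have hεδ : ¬ ε ≤ δ := by
    intro h
    have : ε = ⊥ := le_antisymm (by rw [← hinf]; exact le_inf h le_rfl) bot_le
    exact hsp.2.1.ne' this
  -- key modular computations
  have key1 : ∀ α : L, ε ≤ α → (α ⊓ δ) ⊔ ε = α := by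
    intro α hα
    rw [inf_sup_assoc_of_le _ hα, hsup, inf_top_eq]
  have key2 : ∀ β : L, β ≤ δ → (β ⊔ ε) ⊓ δ = β := by
    intro β hβ
    rw [sup_inf_assoc_of_le _ hβ, inf_comm, hinf, sup_bot_eq]
  refine ⟨⟨fun α => (⟨α ⊓ δ, inf_le_right⟩, ε ≤ α),
    fun p => if p.2 then (p.1 : L) ⊔ ε else (p.1 : L), ?_, ?_⟩, ?_⟩
  · intro α
    dsimp only
    by_cases h : ε ≤ α
    · rw [if_pos h]
      exact key1 α h
    · rw [if_neg h]
      rcases hsp.2.2 α with h' | h'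
      · exact absurd h' h
      · exact inf_eq_left.2 h'
  · rintro ⟨⟨β, hβ⟩, p⟩
    dsimp only
    by_cases hp : p
    · rw [if_pos hp]
      have h1 : ε ≤ β ⊔ ε := le_sup_right
      have : (β ⊔ ε) ⊓ δ = β := key2 β hβ
      refine Prod.ext (Subtype.ext this) ?_
      simp only
      exact propext ⟨fun _ => hp, fun _ => h1⟩
    · rw [if_neg hp]
      have h2 : ¬ ε ≤ β := fun h => hεδ (h.trans hβ)
      refine Prod.ext (Subtype.ext (inf_eq_left.2 hβ)) ?_
      simp only
      exact propext ⟨fun h => absurd h h2, fun h => absurd h hp⟩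
  · intro α α'
    simp only [Equiv.coe_fn_mk, Prod.mk_le_mk, Subtype.mk_le_mk]
    constructor
    · rintro ⟨h1, h2⟩
      rcases hsp.2.2 α with hα | hα
      · have hα' : ε ≤ α' := h2 hα
        calc α = (α ⊓ δ) ⊔ ε := (key1 α hα).symm
          _ ≤ (α' ⊓ δ) ⊔ ε := sup_le_sup_right (show α ⊓ δ ≤ α' ⊓ δ from h1) _
          _ = α' := key1 α' hα'
      · calc α = α ⊓ δ := (inf_eq_left.2 hα).symm
          _ ≤ α' ⊓ δ := h1
          _ ≤ α' := inf_le_left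
    · intro h
      exact ⟨inf_le_inf_right _ h, fun hε => hε.trans h⟩

/-- Rearranging the product with one more `Prop` factor. -/
def shuffleIso (M : Type) [Lattice M] (n : ℕ) :
    (M × (Fin n → Prop)) × Prop ≃o M × (Fin (n + 1) → Prop) := by
  refine ⟨⟨fun p => (p.1.1, Fin.cons p.2 p.1.2),
    fun q => ((q.1, fun i => q.2 i.succ), q.2 0), ?_, ?_⟩, ?_⟩
  · rintro ⟨⟨m, g⟩, p⟩
    simp [Fin.cons_succ, Fin.cons_zero]
  · rintro ⟨m, h⟩
    refine Prod.ext rfl ?_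
    simp only
    funext i
    refine Fin.cases ?_ ?_ i <;> simp [Fin.cons_zero, Fin.cons_succ]
  · rintro ⟨⟨m, g⟩, p⟩ ⟨⟨m', g'⟩, p'⟩
    simp only [Equiv.coe_fn_mk, Prod.mk_le_mk, Pi.le_def]
    constructor
    · rintro ⟨h1, h2⟩
      refine ⟨⟨h1, fun i => ?_⟩, ?_⟩
      · have := h2 i.succ
        simpa [Fin.cons_succ] using this
      · have := h2 0
        simpa [Fin.cons_zero] using this
    · rintro ⟨⟨h1, h2⟩, h3⟩
      refine ⟨h1, fun i => ?_⟩
      refine Fin.cases ?_ ?_ i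
      · simpa [Fin.cons_zero] using h3
      · intro j
        simpa [Fin.cons_succ] using h2 j

theorem main_ind : ∀ N : ℕ, ∀ (L : Type) (_ : Lattice L) (_ : BoundedOrder L)
    (_ : IsModularLattice L),
    (∀ c : List L, c.Chain' (· < ·) → c.length ≤ N) → ¬ SplitsStrongly L →
    ∃ (M : Type) (_ : Lattice M) (_ : BoundedOrder M) (n : ℕ),
      ¬ Splits M ∧ Nonempty (L ≃o M × (Fin n → Prop)) := by
  intro N
  induction N with
  | zero =>
    intro L iL bL mL hchain _
    letI := iL; letI := bL
    exfalso
    have := hchain [⊥] (List.isChain_singleton _)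
    simp at this
  | succ N ih =>
    intro L iL bL mL hchain hns
    letI := iL; letI := bL; haveI := mL
    by_cases hsplit : Splits L
    · -- L splits: get a splitting pair, necessarily not strong
      obtain ⟨δ, ε, hsp⟩ := hsplit
      -- δ ⊔ ε = ⊤
      have hsup : δ ⊔ ε = ⊤ := by
        by_contra h
        refine hns ⟨δ ⊔ ε, ε, ⟨lt_of_le_of_ne le_top h, hsp.2.1, ?_⟩, le_sup_right⟩
        intro α
        rcases hsp.2.2 α with h' | h'
        · exact Or.inl h'
        · exact Or.inr (h'.trans le_sup_left)
      have hinf : δ ⊓ ε = ⊥ := by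
        by_contra h
        refine hns ⟨δ, δ ⊓ ε, ⟨hsp.1, lt_of_le_of_ne bot_le (Ne.symm h), ?_⟩, inf_le_left⟩
        intro α
        rcases hsp.2.2 α with h' | h'
        · exact Or.inl (le_trans inf_le_right h')
        · exact Or.inr h'
      -- chains in Iic δ are shorter
      have hchain' : ∀ c : List (Set.Iic δ), c.Chain' (· < ·) → c.length ≤ N := by
        intro c hc
        have hmap : (c.map (Subtype.val) ++ [⊤]).Chain' ((· < ·) : L → L → Prop) := by
          rw [List.Chain', List.isChain_append]
          refine ⟨?_, List.isChain_singleton _, ?_⟩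
          · exact (List.isChain_map Subtype.val).mpr (hc.imp fun a b h => Subtype.coe_lt_coe.2 h)
          · intro x hx y hy
            simp only [List.head?_cons, Option.mem_def, Option.some.injEq] at hy
            subst hy
            have hxm : x ∈ c.map Subtype.val := List.mem_of_mem_getLast? hx
            obtain ⟨w, hw, rfl⟩ := List.mem_map.1 hxm
            exact lt_of_le_of_lt w.2 hsp.1
        have := hchain _ hmap
        simp only [List.length_append, List.length_map, List.length_singleton] at this
        omega
      -- Iic δ does not split strongly
      have hns' : ¬ SplitsStrongly (Set.Iic δ) := by
        rintro ⟨⟨δ', hδ'⟩, ⟨ε', hε'⟩, ⟨hlt, hgt, hall⟩, hle⟩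
        refine hns ⟨δ' ⊔ ε, ε', ⟨?_, ?_, ?_⟩, le_trans (by exact_mod_cast hle) le_sup_left⟩
        · -- δ' ⊔ ε < ⊤
          refine lt_of_le_of_ne le_top ?_
          intro h
          have : δ = δ' := by
            have h2 : δ ⊓ ε ⊔ δ' = δ ⊓ (ε ⊔ δ') := inf_sup_assoc_of_le ε hδ'
            rw [hinf, bot_sup_eq, sup_comm, h, inf_top_eq] at h2
            exact h2.symm
          have : (⟨δ', hδ'⟩ : Set.Iic δ) = ⊤ := by
            apply Subtype.ext
            simpa using this.symm
          exact hlt.ne this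
        · -- ⊥ < ε'
          have : (⊥ : Set.Iic δ) < ⟨ε', hε'⟩ := hgt
          rcases lt_iff_le_and_ne.1 this with ⟨_, hne⟩
          refine lt_of_le_of_ne bot_le ?_
          intro h
          exact hne (Subtype.ext (by simp [← h]))
        · intro α
          rcases hsp.2.2 α with hα | hα
          · -- ε ≤ α; consider α ⊓ δ
            rcases hall ⟨α ⊓ δ, inf_le_right⟩ with h | h
            · left
              exact le_trans (by exact_mod_cast h) inf_le_left
            · right
              have hαδ : α ⊓ δ ≤ δ' := by exact_mod_cast h
              have : α = (α ⊓ δ) ⊔ ε := by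
                rw [inf_sup_assoc_of_le _ hα, hsup, inf_top_eq]
              rw [this]
              exact sup_le_sup_right hαδ ε
          · rcases hall ⟨α, hα⟩ with h | h
            · left; exact_mod_cast h
            · right
              exact le_trans (by exact_mod_cast h) le_sup_left
      obtain ⟨M, iM, bM, n, hM, ⟨e⟩⟩ := ih (Set.Iic δ) inferInstance inferInstance inferInstance hchain' hns'
      refine ⟨M, iM, bM, n + 1, hM, ?_⟩
      have e1 : L ≃o Set.Iic δ × Prop := splitIso hsp hsup hinf
      have e2 : Set.Iic δ × Prop ≃o (M × (Fin n → Prop)) × Prop := by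
        refine ⟨Equiv.prodCongr e.toEquiv (Equiv.refl Prop), ?_⟩
        rintro ⟨a, p⟩ ⟨a', p'⟩
        simp [Prod.le_def, e.map_rel_iff]
      exact ⟨(e1.trans e2).trans (shuffleIso M n)⟩
    · refine ⟨L, ‹_›, ‹_›, 0, hsplit, ⟨⟨⟨fun a => (a, fun i => i.elim0),
        fun p => p.1, fun a => rfl, ?_⟩, ?_⟩⟩⟩
      · rintro ⟨a, g⟩
        refine Prod.ext rfl ?_
        funext i
        exact i.elim0
      · intro a b
        simp only [Equiv.coe_fn_mk, Prod.mk_le_mk]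
        exact ⟨fun h => h.1, fun h => ⟨h, fun i => i.elim0⟩⟩

end Aux

theorem modular_finite_height_not_strongly_splitting
    (L : Type) [Lattice L] [BoundedOrder L] [IsModularLattice L]
    (hheight : ∃ N : ℕ, ∀ c : List L, c.Chain' (· < ·) → c.length ≤ N)
    (hns : ¬ SplitsStrongly L) :
    ∃ (M : Type) (_ : Lattice M) (_ : BoundedOrder M) (n : ℕ),
      ¬ Splits M ∧ Nonempty (L ≃o M × (Fin n → Prop)) := by
  obtain ⟨N, hN⟩ := hheight
  exact main_ind N L ‹_› ‹_› ‹_› hN hns
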